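/- Let (L,R) be a Galois correspondence between topological categories D and E over a base category B. Then a topological category X over B is concretely equivalent to Fix(RL) if and only if there exist finally dense concrete functors F : A → X and K : A → D and initially dense concrete functors G : C → X and H : C → E such that E(LKA,HC) = X(FA,GC) (as subsets of B(|A|,|HC|)) for all objects A of A and C of C. -/

import Mathlib

universe u

/-- A quantaloid: a category whose hom-sets are complete lattices and whose
composition preserves arbitrary joins in each variable. -/
structure Quantaloid : Type (u + 1) where
  Obj : Type u
  Hom : Obj → Obj → Type u
  [lat : ∀ S T : Obj, CompleteLattice (Hom S T)]
  comp : ∀ {S T U : Obj}, Hom T U → Hom S T → Hom S U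
  one : ∀ S : Obj, Hom S S
  comp_assoc : ∀ {S T U V : Obj} (w : Hom U V) (v : Hom T U) (u : Hom S T),
      comp (comp w v) u = comp w (comp v u)
  comp_one : ∀ {S T : Obj} (u : Hom S T), comp u (one S) = u
  one_comp : ∀ {S T : Obj} (u : Hom S T), comp (one T) u = u
  comp_sSup : ∀ {S T U : Obj} (v : Hom T U) (s : Set (Hom S T)),
      comp v (sSup s) = ⨆ u ∈ s, comp v u
  sSup_comp : ∀ {S T U : Obj} (s : Set (Hom T U)) (u : Hom S T),
      comp (sSup s) u = ⨆ v ∈ s, comp v u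

attribute [instance] Quantaloid.lat

namespace Quantaloid

variable (Q : Quantaloid.{u})

/-- The left implication `w ↙ u`, characterized by `v ∘ u ≤ w ↔ v ≤ w ↙ u`. -/
def lda {S T U : Q.Obj} (w : Q.Hom S U) (u : Q.Hom S T) : Q.Hom T U :=
  sSup {v | Q.comp v u ≤ w}

/-- The right implication `v ↘ w`, characterized by `v ∘ u ≤ w ↔ u ≤ v ↘ w`. -/
def rda {S T U : Q.Obj} (v : Q.Hom T U) (w : Q.Hom S U) : Q.Hom S T :=
  sSup {u | Q.comp v u ≤ w}

/-- Transport of a `Q`-arrow along equalities of objects. -/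
def cast {S S' T T' : Q.Obj} (hS : S = S') (hT : T = T') (u : Q.Hom S T) : Q.Hom S' T' :=
  hS ▸ hT ▸ u

variable {Q}

theorem comp_mono_left {S T U : Q.Obj} {v v' : Q.Hom T U} (h : v ≤ v') (u : Q.Hom S T) :
    Q.comp v u ≤ Q.comp v' u := by
  have h1 : sSup ({v, v'} : Set (Q.Hom T U)) = v' := by
    rw [sSup_pair]; exact sup_eq_right.mpr h
  calc Q.comp v u ≤ ⨆ x ∈ ({v, v'} : Set (Q.Hom T U)), Q.comp x u :=
        le_iSup₂ (f := fun x _ => Q.comp x u) v (by simp)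
    _ = Q.comp (sSup ({v, v'} : Set (Q.Hom T U))) u := (Q.sSup_comp _ _).symm
    _ = Q.comp v' u := by rw [h1]

theorem comp_mono_right {S T U : Q.Obj} (v : Q.Hom T U) {u u' : Q.Hom S T} (h : u ≤ u') :
    Q.comp v u ≤ Q.comp v u' := by
  have h1 : sSup ({u, u'} : Set (Q.Hom S T)) = u' := by
    rw [sSup_pair]; exact sup_eq_right.mpr h
  calc Q.comp v u ≤ ⨆ x ∈ ({u, u'} : Set (Q.Hom S T)), Q.comp v x :=
        le_iSup₂ (f := fun x _ => Q.comp v x) u (by simp)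
    _ = Q.comp v (sSup ({u, u'} : Set (Q.Hom S T))) := (Q.comp_sSup _ _).symm
    _ = Q.comp v u' := by rw [h1]

theorem comp_lda_le {S T U : Q.Obj} (w : Q.Hom S U) (u : Q.Hom S T) :
    Q.comp (Q.lda w u) u ≤ w := by
  rw [lda, Q.sSup_comp]
  exact iSup₂_le fun v hv => hv

theorem comp_rda_le {S T U : Q.Obj} (v : Q.Hom T U) (w : Q.Hom S U) :
    Q.comp v (Q.rda v w) ≤ w := by
  rw [rda, Q.comp_sSup]
  exact iSup₂_le fun u hu => hu

theorem le_lda {S T U : Q.Obj} {u : Q.Hom S T} {v : Q.Hom T U} {w : Q.Hom S U} :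
    Q.comp v u ≤ w ↔ v ≤ Q.lda w u :=
  ⟨fun h => le_sSup h, fun h => le_trans (comp_mono_left h u) (comp_lda_le w u)⟩

theorem le_rda {S T U : Q.Obj} {u : Q.Hom S T} {v : Q.Hom T U} {w : Q.Hom S U} :
    Q.comp v u ≤ w ↔ u ≤ Q.rda v w :=
  ⟨fun h => le_sSup h, fun h => le_trans (comp_mono_right v h) (comp_rda_le v w)⟩

theorem cast_cast {S S' S'' T T' T'' : Q.Obj} (h1 : S = S') (h2 : T = T')
    (h3 : S' = S'') (h4 : T' = T'') (u : Q.Hom S T) :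
    Q.cast h3 h4 (Q.cast h1 h2 u) = Q.cast (h1.trans h3) (h2.trans h4) u := by
  subst h1; subst h2; subst h3; subst h4; rfl

theorem cast_mono {S S' T T' : Q.Obj} (hS : S = S') (hT : T = T') {u v : Q.Hom S T}
    (h : u ≤ v) : Q.cast hS hT u ≤ Q.cast hS hT v := by
  subst hS; subst hT; exact h

end Quantaloid
/-! ## Quantaloid-enriched categories -/

/-- A `Q`-category: a class of objects with extents and hom-arrows in `Q`. -/
structure QCat (Q : Quantaloid.{u}) : Type (u + 1) where
  Obj : Type u
  ext : Obj → Q.Obj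
  hom : ∀ X Y : Obj, Q.Hom (ext X) (ext Y)
  one_le : ∀ X, Q.one (ext X) ≤ hom X X
  comp_le : ∀ X Y Z, Q.comp (hom Y Z) (hom X Y) ≤ hom X Z

/-- A `Q`-relation between (the object classes of) two `Q`-categories. -/
abbrev QRel (Q : Quantaloid.{u}) (D E : QCat Q) : Type u :=
  ∀ (X : D.Obj) (Y : E.Obj), Q.Hom (D.ext X) (E.ext Y)

/-- The hom `Q`-relation of a `Q`-category. -/
def QCat.homRel {Q : Quantaloid.{u}} (E : QCat Q) : QRel Q E E := fun X Y => E.hom X Y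

/-- Composition of `Q`-relations. -/
def QRel.comp {Q : Quantaloid.{u}} {C D E : QCat Q} (Ψ : QRel Q D E) (Φ : QRel Q C D) :
    QRel Q C E :=
  fun X Z => ⨆ Y : D.Obj, Q.comp (Ψ Y Z) (Φ X Y)

/-- Left implication of `Q`-relations: `(Ξ ↙ Φ)(Y,Z) = ⋀_X Ξ(X,Z) ↙ Φ(X,Y)`. -/
def QRel.lda {Q : Quantaloid.{u}} {C D E : QCat Q} (Ξ : QRel Q C E) (Φ : QRel Q C D) :
    QRel Q D E :=
  fun Y Z => ⨅ X : C.Obj, Q.lda (Ξ X Z) (Φ X Y)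

/-- Right implication of `Q`-relations: `(Ψ ↘ Ξ)(X,Y) = ⋀_Z Ψ(Y,Z) ↘ Ξ(X,Z)`. -/
def QRel.rda {Q : Quantaloid.{u}} {C D E : QCat Q} (Ψ : QRel Q D E) (Ξ : QRel Q C E) :
    QRel Q C D :=
  fun X Y => ⨅ Z : E.Obj, Q.rda (Ψ Y Z) (Ξ X Z)

/-- A `Q`-relation between `Q`-categories is a `Q`-distributor if `E ∘ Φ ∘ D ≤ Φ`. -/
def IsDist {Q : Quantaloid.{u}} {D E : QCat Q} (Φ : QRel Q D E) : Prop :=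
  QRel.comp E.homRel (QRel.comp Φ D.homRel) ≤ Φ

/-- The one-object `Q`-category on an object `T` of `Q`, with hom `1_T`. -/
def singleQCat (Q : Quantaloid.{u}) (T : Q.Obj) : QCat Q where
  Obj := PUnit
  ext _ := T
  hom _ _ := Q.one T
  one_le _ := le_rfl
  comp_le _ _ _ := le_of_eq (Q.comp_one _)

/-- A sink of extent `T` on a `Q`-category `E`: a `Q`-relation `E₀ ⇸ {T}`. -/
abbrev Sink {Q : Quantaloid.{u}} (E : QCat Q) (T : Q.Obj) : Type u :=
  QRel Q E (singleQCat Q T)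

/-- A source of extent `T` on a `Q`-category `E`: a `Q`-relation `{T} ⇸ E₀`. -/
abbrev Source {Q : Quantaloid.{u}} (E : QCat Q) (T : Q.Obj) : Type u :=
  QRel Q (singleQCat Q T) E

/-- `Y` is the supremum of the sink `σ`: `Y` has extent `T` and `E(Y,−) = E ↙ σ`. -/
structure IsSup {Q : Quantaloid.{u}} (E : QCat Q) {T : Q.Obj} (σ : Sink E T) (Y : E.Obj) :
    Prop where
  ext : E.ext Y = T
  hom : ∀ Z : E.Obj, Q.cast ext rfl (E.hom Y Z) = QRel.lda E.homRel σ PUnit.unit Z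

/-- `Y` is the infimum of the source `τ`: `Y` has extent `T` and `E(−,Y) = τ ↘ E`. -/
structure IsInf {Q : Quantaloid.{u}} (E : QCat Q) {T : Q.Obj} (τ : Source E T) (Y : E.Obj) :
    Prop where
  ext : E.ext Y = T
  hom : ∀ Z : E.Obj, Q.cast rfl ext (E.hom Z Y) = QRel.rda τ E.homRel Z PUnit.unit

/-- A `Q`-category is total if every sink on it has a supremum. -/
def QCat.Total {Q : Quantaloid.{u}} (E : QCat Q) : Prop :=
  ∀ (T : Q.Obj) (σ : Sink E T), ∃ Y : E.Obj, IsSup E σ Y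

/-- A `Q`-functor between `Q`-categories. -/
structure QFun {Q : Quantaloid.{u}} (D E : QCat Q) : Type u where
  obj : D.Obj → E.Obj
  ext : ∀ X, E.ext (obj X) = D.ext X
  hom_le : ∀ X Y, D.hom X Y ≤ Q.cast (ext X) (ext Y) (E.hom (obj X) (obj Y))

/-- The graph `F_♮(X,Y) = E(FX,Y)` of a `Q`-functor. -/
def QFun.graph {Q : Quantaloid.{u}} {D E : QCat Q} (F : QFun D E) : QRel Q D E :=
  fun X Y => Q.cast (F.ext X) rfl (E.hom (F.obj X) Y)

/-- The cograph `F^♮(Y,X) = E(Y,FX)` of a `Q`-functor. -/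
def QFun.cograph {Q : Quantaloid.{u}} {D E : QCat Q} (F : QFun D E) : QRel Q E D :=
  fun Y X => Q.cast rfl (F.ext X) (E.hom Y (F.obj X))

/-- `Y` is the colimit of `F` weighted by the sink `σ`: `E(Y,−) = F_♮ ↙ σ`. -/
structure IsColim {Q : Quantaloid.{u}} {D E : QCat Q} (F : QFun D E) {T : Q.Obj}
    (σ : Sink D T) (Y : E.Obj) : Prop where
  ext : E.ext Y = T
  hom : ∀ Z : E.Obj, Q.cast ext rfl (E.hom Y Z) = QRel.lda F.graph σ PUnit.unit Z

/-- `Y` is the limit of `F` weighted by the source `τ`: `E(−,Y) = τ ↘ F^♮`. -/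
structure IsLim {Q : Quantaloid.{u}} {D E : QCat Q} (F : QFun D E) {T : Q.Obj}
    (τ : Source D T) (Y : E.Obj) : Prop where
  ext : E.ext Y = T
  hom : ∀ Z : E.Obj, Q.cast rfl ext (E.hom Z Y) = QRel.rda τ F.cograph Z PUnit.unit

/-- A `Q`-functor is dense if every object of its codomain is a weighted colimit of it. -/
def QFun.Dense {Q : Quantaloid.{u}} {D E : QCat Q} (F : QFun D E) : Prop :=
  ∀ Y : E.Obj, ∃ (T : Q.Obj) (σ : Sink D T), IsColim F σ Y

/-- A `Q`-functor is codense if every object of its codomain is a weighted limit of it. -/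
def QFun.Codense {Q : Quantaloid.{u}} {D E : QCat Q} (F : QFun D E) : Prop :=
  ∀ Y : E.Obj, ∃ (T : Q.Obj) (τ : Source D T), IsLim F τ Y

/-- The underlying (pre)order of a `Q`-category: `X ≤ Y` iff `|X| = |Y|` and
`1_{|X|} ≤ E(X,Y)`. -/
def QCat.le {Q : Quantaloid.{u}} (E : QCat Q) (X Y : E.Obj) : Prop :=
  ∃ h : E.ext X = E.ext Y, Q.cast rfl h (Q.one (E.ext X)) ≤ E.hom X Y

/-- `X ≅ Y` in the underlying order of a `Q`-category. -/
def QCat.iso {Q : Quantaloid.{u}} (E : QCat Q) (X Y : E.Obj) : Prop :=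
  E.le X Y ∧ E.le Y X

/-- A `Q`-category is separated if isomorphic objects are equal. -/
def QCat.Separated {Q : Quantaloid.{u}} (E : QCat Q) : Prop :=
  ∀ X Y : E.Obj, E.iso X Y → X = Y

/-- The identity `Q`-functor. -/
def QFun.id {Q : Quantaloid.{u}} (E : QCat Q) : QFun E E where
  obj X := X
  ext _ := rfl
  hom_le _ _ := le_rfl

/-- Composition of `Q`-functors. -/
def QFun.comp {Q : Quantaloid.{u}} {C D E : QCat Q} (G : QFun D E) (F : QFun C D) :
    QFun C E where
  obj X := G.obj (F.obj X)
  ext X := (G.ext (F.obj X)).trans (F.ext X)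
  hom_le X Y := by
    refine le_trans (F.hom_le X Y) ?_
    refine le_trans (Quantaloid.cast_mono (F.ext X) (F.ext Y)
      (G.hom_le (F.obj X) (F.obj Y))) ?_
    rw [Quantaloid.cast_cast]

/-- The full `Q`-subcategory of `E` on the objects satisfying `P`. -/
def QCat.full {Q : Quantaloid.{u}} (E : QCat Q) (P : E.Obj → Prop) : QCat Q where
  Obj := {X : E.Obj // P X}
  ext X := E.ext X.1
  hom X Y := E.hom X.1 Y.1
  one_le X := E.one_le X.1
  comp_le X Y Z := E.comp_le X.1 Y.1 Z.1

/-- The inclusion `Q`-functor of a full `Q`-subcategory. -/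
def QCat.incl {Q : Quantaloid.{u}} (E : QCat Q) (P : E.Obj → Prop) :
    QFun (E.full P) E where
  obj X := X.1
  ext _ := rfl
  hom_le _ _ := le_rfl

/-- The full `Q`-subcategory of fixed points of an endo-`Q`-functor. -/
def QCat.fix {Q : Quantaloid.{u}} (E : QCat Q) (F : QFun E E) : QCat Q :=
  E.full (fun X => E.iso (F.obj X) X)

/-- Adjoint `Q`-functors: `L ⊣ R` iff `E(LX,Y) = D(X,RY)`. -/
def QAdj {Q : Quantaloid.{u}} {D E : QCat Q} (L : QFun D E) (R : QFun E D) : Prop :=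
  ∀ (X : D.Obj) (Y : E.Obj), L.graph X Y = Q.cast rfl (R.ext Y) (D.hom X (R.obj Y))

/-- An essentially surjective `Q`-functor. -/
def QFun.EssSurj {Q : Quantaloid.{u}} {D E : QCat Q} (F : QFun D E) : Prop :=
  ∀ Y : E.Obj, ∃ X : D.Obj, E.iso Y (F.obj X)

/-- Equivalence of `Q`-categories. -/
def QEquiv {Q : Quantaloid.{u}} (D E : QCat Q) : Prop :=
  ∃ (F : QFun D E) (G : QFun E D),
    (∀ X, D.iso (G.obj (F.obj X)) X) ∧ (∀ Y, E.iso (F.obj (G.obj Y)) Y)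

/-- Isomorphism of `Q`-categories. -/
def QIso {Q : Quantaloid.{u}} (D E : QCat Q) : Prop :=
  ∃ (F : QFun D E) (G : QFun E D),
    (∀ X, G.obj (F.obj X) = X) ∧ (∀ Y, F.obj (G.obj Y) = Y)

/-- Tensor: `Y = f ⊗ X` iff `E(Y,−) = E(X,−) ↙ f`. -/
structure IsTensor {Q : Quantaloid.{u}} (E : QCat Q) {T : Q.Obj} (X : E.Obj)
    (f : Q.Hom (E.ext X) T) (Y : E.Obj) : Prop where
  ext : E.ext Y = T
  hom : ∀ Z : E.Obj, Q.cast ext rfl (E.hom Y Z) = Q.lda (E.hom X Z) f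

/-- Cotensor: `Y = g ⤳ X` iff `E(−,Y) = g ↘ E(−,X)`. -/
structure IsCotensor {Q : Quantaloid.{u}} (E : QCat Q) {T : Q.Obj} (X : E.Obj)
    (g : Q.Hom T (E.ext X)) (Y : E.Obj) : Prop where
  ext : E.ext Y = T
  hom : ∀ Z : E.Obj, Q.cast rfl ext (E.hom Z Y) = Q.rda g (E.hom Z X)
/-! ## The Isbell adjunction and its fixed points -/

section MCat

variable {Q : Quantaloid.{u}} {D E : QCat Q}

/-- The Isbell upper map of a `Q`-distributor `Φ : D ⇸ E` on (pre)sheaves: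
`Φ↑σ = Φ ↙ σ`. -/
def isbellUp (Φ : QRel Q D E) {T : Q.Obj} (σ : Sink D T) : Source E T :=
  QRel.lda Φ σ

/-- The Isbell lower map of a `Q`-distributor `Φ : D ⇸ E` on (co)presheaves:
`Φ↓τ = τ ↘ Φ`. -/
def isbellDown (Φ : QRel Q D E) {T : Q.Obj} (τ : Source E T) : Sink D T :=
  QRel.rda τ Φ

/-- `MΦ = Fix(Φ↓Φ↑)`: the full `Q`-subcategory of the presheaf `Q`-category of `D`
consisting of the presheaves fixed by the Isbell adjunction induced by `Φ`. -/
def MCat (Φ : QRel Q D E) : QCat Q where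
  Obj := Σ T : Q.Obj, {σ : Sink D T // IsDist σ ∧ isbellDown Φ (isbellUp Φ σ) = σ}
  ext p := p.1
  hom p q := QRel.lda q.2.1 p.2.1 PUnit.unit PUnit.unit
  one_le p := by
    refine le_iInf fun X => Quantaloid.le_lda.mp ?_
    exact le_of_eq (Q.one_comp _)
  comp_le p q r := by
    refine le_iInf fun X => Quantaloid.le_lda.mp ?_
    refine le_trans (le_of_eq (Q.comp_assoc _ _ _)) ?_
    have h1 : Q.comp (QRel.lda q.2.1 p.2.1 PUnit.unit PUnit.unit) (p.2.1 X PUnit.unit) ≤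
        q.2.1 X PUnit.unit := by
      refine le_trans (Quantaloid.comp_mono_left (iInf_le _ X) _) ?_
      exact Quantaloid.comp_lda_le _ _
    refine le_trans (Quantaloid.comp_mono_right _ h1) ?_
    refine le_trans (Quantaloid.comp_mono_left (iInf_le _ X) _) ?_
    exact Quantaloid.comp_lda_le _ _

end MCat
/-! ## Concrete categories over a base category -/

open CategoryTheory

/-- Transport of a morphism of `B` along equalities of objects. -/
def hcast {B : Type u} [Category.{u} B] {S S' T T' : B} (hS : S = S') (hT : T = T')
    (f : S ⟶ T) : S' ⟶ T' :=
  hS ▸ hT ▸ f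

/-- Transport of a set of morphisms of `B` along equalities of objects. -/
def scast {B : Type u} [Category.{u} B] {S S' T T' : B} (hS : S = S') (hT : T = T')
    (s : Set (S ⟶ T)) : Set (S' ⟶ T') :=
  hcast hS hT '' s

theorem hcast_hcast {B : Type u} [Category.{u} B] {S S' S'' T T' T'' : B}
    (h1 : S = S') (h2 : T = T') (h3 : S' = S'') (h4 : T' = T'') (f : S ⟶ T) :
    hcast h3 h4 (hcast h1 h2 f) = hcast (h1.trans h3) (h2.trans h4) f := by
  subst h1; subst h2; subst h3; subst h4; rfl

/-- A concrete category over a base category `B`, described by its objects, extents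
and hom-sets of `B`-morphisms. -/
structure ConcCat (B : Type u) [Category.{u} B] : Type (u + 1) where
  Obj : Type u
  ext : Obj → B
  hom : ∀ X Y : Obj, Set (ext X ⟶ ext Y)
  id_mem : ∀ X, 𝟙 (ext X) ∈ hom X X
  comp_mem : ∀ {X Y Z : Obj} {f : ext X ⟶ ext Y} {g : ext Y ⟶ ext Z},
      f ∈ hom X Y → g ∈ hom Y Z → f ≫ g ∈ hom X Z

variable {B : Type u} [Category.{u} B]

/-- A concrete functor over `B`. -/
structure ConcFun (D E : ConcCat B) : Type u where
  obj : D.Obj → E.Obj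
  ext : ∀ X, E.ext (obj X) = D.ext X
  mem : ∀ {X Y : D.Obj} {f : D.ext X ⟶ D.ext Y}, f ∈ D.hom X Y →
      hcast (ext X).symm (ext Y).symm f ∈ E.hom (obj X) (obj Y)

/-- The underlying (pre)order of a concrete category: `X ≤ Y` iff `|X| = |Y|` and
`1_{|X|} ∈ E(X,Y)`. -/
def ConcCat.le (E : ConcCat B) (X Y : E.Obj) : Prop :=
  ∃ h : E.ext X = E.ext Y, hcast rfl h (𝟙 (E.ext X)) ∈ E.hom X Y

/-- `X ≅ Y` in the underlying order of a concrete category. -/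
def ConcCat.iso (E : ConcCat B) (X Y : E.Obj) : Prop :=
  E.le X Y ∧ E.le Y X

/-- The identity concrete functor. -/
def ConcFun.id (E : ConcCat B) : ConcFun E E where
  obj X := X
  ext _ := rfl
  mem hf := hf

/-- Composition of concrete functors. -/
def ConcFun.comp {C D E : ConcCat B} (G : ConcFun D E) (F : ConcFun C D) :
    ConcFun C E where
  obj X := G.obj (F.obj X)
  ext X := (G.ext (F.obj X)).trans (F.ext X)
  mem {X Y f} hf := by
    have h := G.mem (F.mem hf)
    rw [hcast_hcast] at h
    exact h

/-- The full concrete subcategory on the objects satisfying `P`. -/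
def ConcCat.full (E : ConcCat B) (P : E.Obj → Prop) : ConcCat B where
  Obj := {X : E.Obj // P X}
  ext X := E.ext X.1
  hom X Y := E.hom X.1 Y.1
  id_mem X := E.id_mem X.1
  comp_mem hf hg := E.comp_mem hf hg

/-- The inclusion concrete functor of a full subcategory. -/
def ConcCat.incl (E : ConcCat B) (P : E.Obj → Prop) : ConcFun (E.full P) E where
  obj X := X.1
  ext _ := rfl
  mem hf := hf

/-- The full subcategory of fixed points of an endo concrete functor. -/
def ConcCat.fix (E : ConcCat B) (F : ConcFun E E) : ConcCat B :=
  E.full (fun X => E.iso (F.obj X) X)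

/-- A Galois correspondence `(L,R)` between concrete categories:
`E(LX,Y) = D(X,RY)` as subsets of `B(|X|,|Y|)`. -/
def Galois {D E : ConcCat B} (L : ConcFun D E) (R : ConcFun E D) : Prop :=
  ∀ (X : D.Obj) (Y : E.Obj),
    scast (L.ext X) rfl (E.hom (L.obj X) Y) = scast rfl (R.ext Y) (D.hom X (R.obj Y))

/-- An essentially surjective concrete functor. -/
def ConcFun.EssSurj {D E : ConcCat B} (F : ConcFun D E) : Prop :=
  ∀ Y : E.Obj, ∃ X : D.Obj, E.iso Y (F.obj X)

/-- Concrete equivalence of concrete categories. -/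
def ConcEquiv (D E : ConcCat B) : Prop :=
  ∃ (F : ConcFun D E) (G : ConcFun E D),
    (∀ X, D.iso (G.obj (F.obj X)) X) ∧ (∀ Y, E.iso (F.obj (G.obj Y)) Y)

/-- `Y` is an initial lifting of the `E`-structured source `(g_i : T → |X_i|)`. -/
structure IsInitialLifting (E : ConcCat B) {T : B} {ι : Type u} (X : ι → E.Obj)
    (g : ∀ i, T ⟶ E.ext (X i)) (Y : E.Obj) : Prop where
  ext : E.ext Y = T
  mem : ∀ i, hcast ext.symm rfl (g i) ∈ E.hom Y (X i)
  initial : ∀ (Z : E.Obj) (f : E.ext Z ⟶ T),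
      (∀ i, f ≫ g i ∈ E.hom Z (X i)) → hcast rfl ext.symm f ∈ E.hom Z Y

/-- `Y` is a final lifting of the `E`-structured sink `(f_i : |X_i| → T)`. -/
structure IsFinalLifting (E : ConcCat B) {T : B} {ι : Type u} (X : ι → E.Obj)
    (f : ∀ i, E.ext (X i) ⟶ T) (Y : E.Obj) : Prop where
  ext : E.ext Y = T
  mem : ∀ i, hcast rfl ext.symm (f i) ∈ E.hom (X i) Y
  final : ∀ (Z : E.Obj) (g : T ⟶ E.ext Z),
      (∀ i, f i ≫ g ∈ E.hom (X i) Z) → hcast ext.symm rfl g ∈ E.hom Y Z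

/-- A concrete category is topological over `B` if every structured source admits
an initial lifting. -/
def Topological (E : ConcCat B) : Prop :=
  ∀ (T : B) (ι : Type u) (X : ι → E.Obj) (g : ∀ i, T ⟶ E.ext (X i)),
    ∃ Y : E.Obj, IsInitialLifting E X g Y

/-- A concrete functor `F : D → E` is initially dense if every object of `E` is the
domain of an initial source with codomains in the image of `F`. -/
def InitiallyDense {D E : ConcCat B} (F : ConcFun D E) : Prop :=
  ∀ Y : E.Obj, ∃ (ι : Type u) (X : ι → D.Obj) (g : ∀ i, E.ext Y ⟶ E.ext (F.obj (X i))),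
    (∀ i, g i ∈ E.hom Y (F.obj (X i))) ∧
    ∀ (Z : E.Obj) (f : E.ext Z ⟶ E.ext Y),
      (∀ i, f ≫ g i ∈ E.hom Z (F.obj (X i))) → f ∈ E.hom Z Y

/-- A concrete functor `F : D → E` is finally dense if every object of `E` is the
codomain of a final sink with domains in the image of `F`. -/
def FinallyDense {D E : ConcCat B} (F : ConcFun D E) : Prop :=
  ∀ Y : E.Obj, ∃ (ι : Type u) (X : ι → D.Obj) (f : ∀ i, E.ext (F.obj (X i)) ⟶ E.ext Y),
    (∀ i, f i ∈ E.hom (F.obj (X i)) Y) ∧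
    ∀ (Z : E.Obj) (g : E.ext Y ⟶ E.ext Z),
      (∀ i, f i ≫ g ∈ E.hom (F.obj (X i)) Z) → g ∈ E.hom Y Z
/-! ## The free quantaloid and the `QB`-category associated to a concrete category -/

/-- The free quantaloid on a category `B`: hom-lattices are powersets of hom-sets,
with elementwise composition. -/
def freeQuantaloid (B : Type u) [Category.{u} B] : Quantaloid.{u} where
  Obj := B
  Hom S T := Set (S ⟶ T)
  lat _ _ := inferInstance
  comp := fun {S T U} g f => {h | ∃ a ∈ f, ∃ b ∈ g, a ≫ b = h}
  one S := {𝟙 S}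
  comp_assoc := by
    intro S T U V w v u
    ext h
    constructor
    · rintro ⟨a, ha, b, ⟨c, hc, d, hd, rfl⟩, rfl⟩
      exact ⟨a ≫ c, ⟨a, ha, c, hc, rfl⟩, d, hd, by simp⟩
    · rintro ⟨a, ⟨c, hc, e, he, rfl⟩, b, hb, rfl⟩
      exact ⟨c, hc, e ≫ b, ⟨e, he, b, hb, rfl⟩, by simp⟩
  comp_one := by
    intro S T u
    ext h
    simp
  one_comp := by
    intro S T u
    ext h
    simp
  comp_sSup := by
    intro S T U v s
    ext h
    simp only [Set.sSup_eq_sUnion, Set.mem_sUnion, Set.iSup_eq_iUnion, Set.mem_iUnion,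
      Set.mem_setOf_eq]
    constructor
    · rintro ⟨a, ⟨t, ht, hat⟩, b, hb, rfl⟩
      exact ⟨t, ht, a, hat, b, hb, rfl⟩
    · rintro ⟨t, ht, a, hat, b, hb, rfl⟩
      exact ⟨a, ⟨t, ht, hat⟩, b, hb, rfl⟩
  sSup_comp := by
    intro S T U s u
    ext h
    simp only [Set.sSup_eq_sUnion, Set.mem_sUnion, Set.iSup_eq_iUnion, Set.mem_iUnion,
      Set.mem_setOf_eq]
    constructor
    · rintro ⟨a, ha, b, ⟨t, ht, hbt⟩, rfl⟩
      exact ⟨t, ht, a, ha, b, hbt, rfl⟩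
    · rintro ⟨t, ht, a, ha, b, hbt, rfl⟩
      exact ⟨a, ha, b, ⟨t, ht, hbt⟩, rfl⟩

variable {B : Type u} [Category.{u} B]

instance {S T : B} : Membership (S ⟶ T) ((freeQuantaloid B).Hom S T) :=
  inferInstanceAs (Membership (S ⟶ T) (Set (S ⟶ T)))

theorem mem_qcast {S S' T T' : B} (hS : S = S') (hT : T = T')
    (s : Set (S ⟶ T)) (f : S' ⟶ T') :
    f ∈ (freeQuantaloid B).cast hS hT s ↔ hcast hS.symm hT.symm f ∈ s := by
  subst hS; subst hT; exact Iff.rfl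

/-- The `QB`-category associated to a concrete category over `B`. -/
def ConcCat.bar (E : ConcCat B) : QCat (freeQuantaloid B) where
  Obj := E.Obj
  ext := E.ext
  hom := E.hom
  one_le X := by
    intro h hh
    rcases hh with rfl
    exact E.id_mem X
  comp_le X Y Z := by
    rintro h ⟨a, ha, b, hb, rfl⟩
    exact E.comp_mem ha hb

/-- The `QB`-functor associated to a concrete functor over `B`. -/
def ConcFun.bar {D E : ConcCat B} (F : ConcFun D E) : QFun D.bar E.bar where
  obj := F.obj
  ext := F.ext
  hom_le X Y := by
    intro f hf
    exact (mem_qcast (F.ext X) (F.ext Y) _ f).mpr (F.mem hf)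

/-- The source on the `QB`-category `Ē` associated to an `E`-structured source
`(g_i : T → |X_i|)`, given by `τ̄(X) = {g_i ∣ X_i = X}`. -/
def barSource (E : ConcCat B) {T : B} {ι : Type u} (X : ι → E.Obj)
    (g : ∀ i, T ⟶ E.ext (X i)) : Source E.bar T :=
  fun _ Z => {f | ∃ (i : ι) (h : X i = Z), hcast rfl (congrArg E.ext h) (g i) = f}

/-- The sink on the `QB`-category `Ē` associated to an `E`-structured sink
`(f_i : |X_i| → T)`, given by `σ̄(X) = {f_i ∣ X_i = X}`. -/
def barSink (E : ConcCat B) {T : B} {ι : Type u} (X : ι → E.Obj)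
    (f : ∀ i, E.ext (X i) ⟶ T) : Sink E.bar T :=
  fun Z _ => {h | ∃ (i : ι) (hE : X i = Z), hcast (congrArg E.ext hE) rfl (f i) = h}
section FixRepr
open CategoryTheory

section Aux
variable {B : Type u} [Category.{u} B]

theorem hcast_eq {S S' T T' : B} (hS : S = S') (hT : T = T') (f : S ⟶ T) :
    hcast hS hT f = eqToHom hS.symm ≫ f ≫ eqToHom hT := by
  subst hS; subst hT; simp [hcast]

theorem mem_scast {S S' T T' : B} (hS : S = S') (hT : T = T') (s : Set (S ⟶ T))
    (f : S' ⟶ T') :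
    f ∈ scast hS hT s ↔ eqToHom hS ≫ f ≫ eqToHom hT.symm ∈ s := by
  subst hS; subst hT
  simp [scast, hcast]

theorem ConcCat.le_iff {E : ConcCat B} {X Y : E.Obj} :
    E.le X Y ↔ ∃ h : E.ext X = E.ext Y, eqToHom h ∈ E.hom X Y := by
  constructor <;> rintro ⟨h, hm⟩ <;> refine ⟨h, ?_⟩
  · simpa [hcast_eq] using hm
  · simpa [hcast_eq]

theorem eqToHom_mem {E : ConcCat B} {X Y : E.Obj} (hle : E.le X Y)
    (h : E.ext X = E.ext Y) : eqToHom h ∈ E.hom X Y := by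
  obtain ⟨h', hm⟩ := ConcCat.le_iff.mp hle
  rwa [Subsingleton.elim h h']

theorem le_comp_mem {E : ConcCat B} {X Y Z : E.Obj} (hle : E.le X Y)
    (h : E.ext X = E.ext Y) {f : E.ext Y ⟶ E.ext Z} (hf : f ∈ E.hom Y Z) :
    eqToHom h ≫ f ∈ E.hom X Z :=
  E.comp_mem (eqToHom_mem hle h) hf

theorem mem_comp_le {E : ConcCat B} {X Y Z : E.Obj} {f : E.ext X ⟶ E.ext Y}
    (hf : f ∈ E.hom X Y) (hle : E.le Y Z) (h : E.ext Y = E.ext Z) :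
    f ≫ eqToHom h ∈ E.hom X Z :=
  E.comp_mem hf (eqToHom_mem hle h)

theorem ConcCat.le_refl (E : ConcCat B) (X : E.Obj) : E.le X X :=
  ConcCat.le_iff.mpr ⟨rfl, by simpa using E.id_mem X⟩

theorem ConcCat.iso_refl (E : ConcCat B) (X : E.Obj) : E.iso X X :=
  ⟨E.le_refl X, E.le_refl X⟩

theorem ConcCat.le_ext {E : ConcCat B} {X Y : E.Obj} (h : E.le X Y) :
    E.ext X = E.ext Y := h.1

theorem ConcCat.le_trans {E : ConcCat B} {X Y Z : E.Obj} (h1 : E.le X Y)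
    (h2 : E.le Y Z) : E.le X Z := by
  refine ConcCat.le_iff.mpr ⟨h1.1.trans h2.1, ?_⟩
  have := le_comp_mem h1 h1.1 (eqToHom_mem h2 h2.1)
  simpa using this

theorem ConcFun.mem' {D E : ConcCat B} (F : ConcFun D E) {X Y : D.Obj}
    {f : D.ext X ⟶ D.ext Y} (hf : f ∈ D.hom X Y) :
    eqToHom (F.ext X) ≫ f ≫ eqToHom (F.ext Y).symm ∈ E.hom (F.obj X) (F.obj Y) := by
  have := F.mem hf
  rwa [hcast_eq] at this

theorem ConcFun.le_map {D E : ConcCat B} (F : ConcFun D E) {X Y : D.Obj}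
    (h : D.le X Y) : E.le (F.obj X) (F.obj Y) := by
  obtain ⟨h', hm⟩ := ConcCat.le_iff.mp h
  refine ConcCat.le_iff.mpr ⟨(F.ext X).trans (h'.trans (F.ext Y).symm), ?_⟩
  have := F.mem' hm
  simpa using this

theorem ConcFun.iso_map {D E : ConcCat B} (F : ConcFun D E) {X Y : D.Obj}
    (h : D.iso X Y) : E.iso (F.obj X) (F.obj Y) :=
  ⟨F.le_map h.1, F.le_map h.2⟩

theorem galois_iff {D E : ConcCat B} {L : ConcFun D E} {R : ConcFun E D}
    (gal : Galois L R) (d : D.Obj) (e : E.Obj) (f : D.ext d ⟶ E.ext e) :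
    eqToHom (L.ext d) ≫ f ∈ E.hom (L.obj d) e ↔
      f ≫ eqToHom (R.ext e).symm ∈ D.hom d (R.obj e) := by
  have h := gal d e
  constructor
  · intro hf
    have h1 : f ∈ scast (L.ext d) rfl (E.hom (L.obj d) e) := by
      rw [mem_scast]; simpa using hf
    rw [h, mem_scast] at h1; simpa using h1
  · intro hf
    have h1 : f ∈ scast rfl (R.ext e) (D.hom d (R.obj e)) := by
      rw [mem_scast]; simpa using hf
    rw [← h, mem_scast] at h1; simpa using h1

theorem galois_unit {D E : ConcCat B} {L : ConcFun D E} {R : ConcFun E D}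
    (gal : Galois L R) (d : D.Obj) : D.le d (R.obj (L.obj d)) := by
  refine ConcCat.le_iff.mpr ⟨((R.ext (L.obj d)).trans (L.ext d)).symm, ?_⟩
  have := (galois_iff gal d (L.obj d) (eqToHom (L.ext d).symm)).mp
    (by simpa using E.id_mem (L.obj d))
  simpa using this

theorem galois_counit {D E : ConcCat B} {L : ConcFun D E} {R : ConcFun E D}
    (gal : Galois L R) (e : E.Obj) : E.le (L.obj (R.obj e)) e := by
  refine ConcCat.le_iff.mpr ⟨(L.ext (R.obj e)).trans (R.ext e), ?_⟩
  have := (galois_iff gal (R.obj e) e (eqToHom (R.ext e))).mpr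
    (by simpa using D.id_mem (R.obj e))
  simpa using this

theorem IsInitialLifting.mem' {E : ConcCat B} {T : B} {ι : Type u} {Xs : ι → E.Obj}
    {g : ∀ i, T ⟶ E.ext (Xs i)} {Y : E.Obj} (l : IsInitialLifting E Xs g Y) (i : ι) :
    eqToHom l.ext ≫ g i ∈ E.hom Y (Xs i) := by
  have := l.mem i
  rw [hcast_eq] at this
  simpa using this

theorem IsInitialLifting.initial' {E : ConcCat B} {T : B} {ι : Type u} {Xs : ι → E.Obj}
    {g : ∀ i, T ⟶ E.ext (Xs i)} {Y : E.Obj} (l : IsInitialLifting E Xs g Y)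
    (Z : E.Obj) (f : E.ext Z ⟶ T) (hf : ∀ i, f ≫ g i ∈ E.hom Z (Xs i)) :
    f ≫ eqToHom l.ext.symm ∈ E.hom Z Y := by
  have := l.initial Z f hf
  rw [hcast_eq] at this
  simpa using this

end Aux

section Aux2
variable {B : Type u} [Category.{u} B]

theorem ConcCat.iso_symm {E : ConcCat B} {X Y : E.Obj} (h : E.iso X Y) : E.iso Y X :=
  ⟨h.2, h.1⟩

theorem ConcCat.iso_trans {E : ConcCat B} {X Y Z : E.Obj} (h1 : E.iso X Y)
    (h2 : E.iso Y Z) : E.iso X Z :=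
  ⟨ConcCat.le_trans h1.1 h2.1, ConcCat.le_trans h2.2 h1.2⟩

theorem essSurj_finallyDense {D E : ConcCat B} (F : ConcFun D E)
    (h : ∀ Y : E.Obj, ∃ X : D.Obj, E.iso Y (F.obj X)) : FinallyDense F := by
  intro Y
  obtain ⟨X₀, hiso⟩ := h Y
  have h₀ : E.ext (F.obj X₀) = E.ext Y := hiso.2.1
  refine ⟨PUnit, fun _ => X₀, fun _ => eqToHom h₀, fun _ => eqToHom_mem hiso.2 h₀, ?_⟩
  intro Z g hg
  have := le_comp_mem hiso.1 h₀.symm (hg PUnit.unit)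
  simpa using this

theorem essSurj_initiallyDense {D E : ConcCat B} (F : ConcFun D E)
    (h : ∀ Y : E.Obj, ∃ X : D.Obj, E.iso Y (F.obj X)) : InitiallyDense F := by
  intro Y
  obtain ⟨X₀, hiso⟩ := h Y
  have h₀ : E.ext Y = E.ext (F.obj X₀) := hiso.1.1
  refine ⟨PUnit, fun _ => X₀, fun _ => eqToHom h₀, fun _ => eqToHom_mem hiso.1 h₀, ?_⟩
  intro Z f hf
  have := mem_comp_le (hf PUnit.unit) hiso.2 h₀.symm
  simpa using this

theorem id_finallyDense (E : ConcCat B) : FinallyDense (ConcFun.id E) :=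
  essSurj_finallyDense _ fun Y => ⟨Y, E.iso_refl Y⟩

theorem id_initiallyDense (E : ConcCat B) : InitiallyDense (ConcFun.id E) :=
  essSurj_initiallyDense _ fun Y => ⟨Y, E.iso_refl Y⟩

end Aux2


variable {B : Type u} [Category.{u} B]

/-- `RL` as a concrete functor into the fixed subcategory. -/
def RLfix {D E : ConcCat B} (L : ConcFun D E) (R : ConcFun E D) (gal : Galois L R) :
    ConcFun D (ConcCat.fix D (ConcFun.comp R L)) where
  obj d := ⟨R.obj (L.obj d),
    ⟨R.le_map (galois_counit gal (L.obj d)), galois_unit gal (R.obj (L.obj d))⟩⟩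
  ext d := (R.ext (L.obj d)).trans (L.ext d)
  mem {d d' f} hf := by
    rw [hcast_eq]
    have := R.mem' (L.mem' hf)
    simp at this ⊢; exact this

/-- `R` as a concrete functor into the fixed subcategory. -/
def Rfix {D E : ConcCat B} (L : ConcFun D E) (R : ConcFun E D) (gal : Galois L R) :
    ConcFun E (ConcCat.fix D (ConcFun.comp R L)) where
  obj e := ⟨R.obj e, ⟨R.le_map (galois_counit gal e), galois_unit gal (R.obj e)⟩⟩
  ext e := R.ext e
  mem {e e' f} hf := by
    rw [hcast_eq]
    have := R.mem' hf
    simp at this ⊢; exact this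

theorem fix_forward {D E : ConcCat B}
    (L : ConcFun D E) (R : ConcFun E D) (gal : Galois L R)
    (X : ConcCat B)
    (heq : ConcEquiv X (ConcCat.fix D (ConcFun.comp R L))) :
    ∃ (A C : ConcCat B) (F : ConcFun A X) (K : ConcFun A D)
      (G : ConcFun C X) (H : ConcFun C E),
      FinallyDense F ∧ FinallyDense K ∧ InitiallyDense G ∧ InitiallyDense H ∧
      ∀ (a : A.Obj) (c : C.Obj),
        scast ((L.ext (K.obj a)).trans (K.ext a)) (H.ext c)
            (E.hom (L.obj (K.obj a)) (H.obj c)) =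
          scast (F.ext a) (G.ext c) (X.hom (F.obj a) (G.obj c)) := by
  set Fx := ConcCat.fix D (ConcFun.comp R L) with hFx
  obtain ⟨Φ', Ψ', hΨΦ, hΦΨ⟩ := heq
  have fixIso : ∀ P Q : Fx.Obj, D.iso P.1 Q.1 → Fx.iso P Q := fun P Q h => h
  refine ⟨D, E, ConcFun.comp Ψ' (RLfix L R gal), ConcFun.id D,
    ConcFun.comp Ψ' (Rfix L R gal), ConcFun.id E, ?_, ?_, ?_, ?_, ?_⟩
  · -- F finally dense
    refine essSurj_finallyDense _ fun x => ⟨(Φ'.obj x).1, ?_⟩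
    have h1 : Fx.iso ((RLfix L R gal).obj (Φ'.obj x).1) (Φ'.obj x) :=
      fixIso _ _ (Φ'.obj x).2
    exact (ConcCat.iso_trans (Ψ'.iso_map h1) (hΨΦ x)).symm
  · exact id_finallyDense D
  · -- G initially dense
    refine essSurj_initiallyDense _ fun x => ⟨L.obj (Φ'.obj x).1, ?_⟩
    have h1 : Fx.iso ((Rfix L R gal).obj (L.obj (Φ'.obj x).1)) (Φ'.obj x) :=
      fixIso _ _ (Φ'.obj x).2
    exact (ConcCat.iso_trans (Ψ'.iso_map h1) (hΨΦ x)).symm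
  · exact id_initiallyDense E
  · -- hom condition
    intro a c
    ext (f : D.ext a ⟶ E.ext c)
    rw [mem_scast, mem_scast]
    show eqToHom (L.ext a) ≫ f ≫ eqToHom (rfl : E.ext c = E.ext c) ∈ E.hom (L.obj a) c ↔
      eqToHom ((Ψ'.ext ((RLfix L R gal).obj a)).trans ((RLfix L R gal).ext a)) ≫ f ≫
        eqToHom ((Ψ'.ext ((Rfix L R gal).obj c)).trans ((Rfix L R gal).ext c)).symm ∈
      X.hom (Ψ'.obj ((RLfix L R gal).obj a)) (Ψ'.obj ((Rfix L R gal).obj c))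
    have q : D.ext (R.obj (L.obj a)) = D.ext a := (R.ext (L.obj a)).trans (L.ext a)
    constructor
    · intro hf
      have w1 := le_comp_mem (galois_counit gal (L.obj a))
        (galois_counit gal (L.obj a)).1 hf
      have w2 := (galois_iff gal (R.obj (L.obj a)) c (eqToHom q ≫ f)).mp
        (by simpa using w1)
      have w3 : eqToHom ((RLfix L R gal).ext a) ≫ f ≫ eqToHom ((Rfix L R gal).ext c).symm ∈
          Fx.hom ((RLfix L R gal).obj a) ((Rfix L R gal).obj c) := by
        simp at w2; exact w2
      have w4 := Ψ'.mem' w3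
      simpa using w4
    · intro hf
      have w1 := Φ'.mem' hf
      have w2 := le_comp_mem (hΦΨ ((RLfix L R gal).obj a)).2
        (hΦΨ ((RLfix L R gal).obj a)).2.1 w1
      have w3 := mem_comp_le w2 (hΦΨ ((Rfix L R gal).obj c)).1
        (hΦΨ ((Rfix L R gal).obj c)).1.1
      have w4 : eqToHom q ≫ f ≫ eqToHom (R.ext c).symm ∈
          D.hom (R.obj (L.obj a)) (R.obj c) := by
        simp at w3; exact w3
      have w5 := (galois_iff gal (R.obj (L.obj a)) c (eqToHom q ≫ f)).mpr
        (by simpa using w4)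
      have w6 := le_comp_mem (L.le_map (galois_unit gal a))
        (L.le_map (galois_unit gal a)).1 w5
      simpa using w6


theorem fix_backward {B : Type u} [Category.{u} B] {D E : ConcCat B}
    (hD : Topological D)
    (L : ConcFun D E) (R : ConcFun E D) (gal : Galois L R)
    (X : ConcCat B) (hX : Topological X)
    {A C : ConcCat B} (F : ConcFun A X) (K : ConcFun A D)
    (G : ConcFun C X) (H : ConcFun C E)
    (hF : FinallyDense F) (hK : FinallyDense K)
    (hG : InitiallyDense G) (hH : InitiallyDense H)
    (hom_eq : ∀ (a : A.Obj) (c : C.Obj),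
      scast ((L.ext (K.obj a)).trans (K.ext a)) (H.ext c)
          (E.hom (L.obj (K.obj a)) (H.obj c)) =
        scast (F.ext a) (G.ext c) (X.hom (F.obj a) (G.obj c))) :
    ConcEquiv X (ConcCat.fix D (ConcFun.comp R L)) := by
  have ec : ∀ c : C.Obj, X.ext (G.obj c) = D.ext (R.obj (H.obj c)) :=
    fun c => (G.ext c).trans ((H.ext c).symm.trans (R.ext (H.obj c)).symm)
  have ea : ∀ a : A.Obj, X.ext (F.obj a) = D.ext (K.obj a) :=
    fun a => (F.ext a).trans (K.ext a).symm
  -- Galois in convenient form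
  have gal' : ∀ (Z : D.Obj) (c : C.Obj) (f : D.ext Z ⟶ D.ext (R.obj (H.obj c))),
      f ∈ D.hom Z (R.obj (H.obj c)) ↔
        eqToHom (L.ext Z) ≫ f ≫ eqToHom (R.ext (H.obj c)) ∈
          E.hom (L.obj Z) (H.obj c) := by
    intro Z c f
    have h := galois_iff gal Z (H.obj c) (f ≫ eqToHom (R.ext (H.obj c)))
    simp only [Category.assoc] at h
    rw [h]
    constructor <;> intro hf
    · simpa using hf
    · simpa using hf
  -- hom condition in convenient form
  have hom' : ∀ (a : A.Obj) (c : C.Obj) (f : A.ext a ⟶ C.ext c),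
      eqToHom ((L.ext (K.obj a)).trans (K.ext a)) ≫ f ≫ eqToHom (H.ext c).symm ∈
          E.hom (L.obj (K.obj a)) (H.obj c) ↔
        eqToHom (F.ext a) ≫ f ≫ eqToHom (G.ext c).symm ∈
          X.hom (F.obj a) (G.obj c) := by
    intro a c f
    constructor <;> intro hf
    · have : f ∈ scast ((L.ext (K.obj a)).trans (K.ext a)) (H.ext c)
          (E.hom (L.obj (K.obj a)) (H.obj c)) := by
        rw [mem_scast]; simpa using hf
      rw [hom_eq a c, mem_scast] at this
      simpa using this
    · have : f ∈ scast (F.ext a) (G.ext c) (X.hom (F.obj a) (G.obj c)) := by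
        rw [mem_scast]; simpa using hf
      rw [← hom_eq a c, mem_scast] at this
      simpa using this
  -- key transfer fact: D(Ka, RHc) = X(Fa, Gc)
  have S5 : ∀ (a : A.Obj) (c : C.Obj) (v : D.ext (K.obj a) ⟶ D.ext (R.obj (H.obj c))),
      v ∈ D.hom (K.obj a) (R.obj (H.obj c)) ↔
        eqToHom (ea a) ≫ v ≫ eqToHom (ec c).symm ∈ X.hom (F.obj a) (G.obj c) := by
    intro a c v
    rw [gal' (K.obj a) c v]
    have h := hom' a c
      (eqToHom (K.ext a).symm ≫ v ≫ eqToHom ((R.ext (H.obj c)).trans (H.ext c)))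
    constructor <;> intro hf
    · have h1 := h.mp (by simpa using hf)
      simpa using h1
    · have h1 := h.mpr (by simpa using hf)
      simpa using h1
  -- the functor Φ : X → D via initial liftings
  have hΦ : ∀ x : X.Obj, ∃ Y, IsInitialLifting D
      (fun p : (Σ c : C.Obj, {g : X.ext x ⟶ X.ext (G.obj c) // g ∈ X.hom x (G.obj c)}) =>
        R.obj (H.obj p.1))
      (fun p => p.2.1 ≫ eqToHom (ec p.1)) Y :=
    fun x => hD (X.ext x) _ _ _
  choose Φ lΦ using hΦ
  -- the functor Ψ : D → X via initial liftings
  have hΨ : ∀ d : D.Obj, ∃ Y, IsInitialLifting X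
      (fun p : (Σ c : C.Obj,
          {g : D.ext d ⟶ D.ext (R.obj (H.obj c)) // g ∈ D.hom d (R.obj (H.obj c))}) =>
        G.obj p.1)
      (fun p => p.2.1 ≫ eqToHom (ec p.1).symm) Y :=
    fun d => hX (D.ext d) _ _ _
  choose Ψ lΨ using hΨ
  -- membership facts for the liftings
  have S3 : ∀ (x : X.Obj) (c : C.Obj) (g : X.ext x ⟶ X.ext (G.obj c)),
      g ∈ X.hom x (G.obj c) →
        eqToHom (lΦ x).ext ≫ g ≫ eqToHom (ec c) ∈ D.hom (Φ x) (R.obj (H.obj c)) := by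
    intro x c g hg
    have := (lΦ x).mem' ⟨c, g, hg⟩
    simpa using this
  have S4 : ∀ (d : D.Obj) (c : C.Obj) (g : D.ext d ⟶ D.ext (R.obj (H.obj c))),
      g ∈ D.hom d (R.obj (H.obj c)) →
        eqToHom (lΨ d).ext ≫ g ≫ eqToHom (ec c).symm ∈ X.hom (Ψ d) (G.obj c) := by
    intro d c g hg
    have := (lΨ d).mem' ⟨c, g, hg⟩
    simpa using this
  -- Φ is a concrete functor
  have ΦFun : ∀ (x y : X.Obj) (f : X.ext x ⟶ X.ext y), f ∈ X.hom x y →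
      eqToHom (lΦ x).ext ≫ f ≫ eqToHom (lΦ y).ext.symm ∈ D.hom (Φ x) (Φ y) := by
    intro x y f hf
    have h1 : ∀ p : (Σ c : C.Obj,
        {g : X.ext y ⟶ X.ext (G.obj c) // g ∈ X.hom y (G.obj c)}),
        (eqToHom (lΦ x).ext ≫ f) ≫ (p.2.1 ≫ eqToHom (ec p.1)) ∈
          D.hom (Φ x) (R.obj (H.obj p.1)) := by
      rintro ⟨c, g, hg⟩
      have := S3 x c (f ≫ g) (X.comp_mem hf hg)
      simpa using this
    have := (lΦ y).initial' (Φ x) (eqToHom (lΦ x).ext ≫ f) h1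
    simpa using this
  -- Ψ is a concrete functor
  have ΨFun : ∀ (d d' : D.Obj) (f : D.ext d ⟶ D.ext d'), f ∈ D.hom d d' →
      eqToHom (lΨ d).ext ≫ f ≫ eqToHom (lΨ d').ext.symm ∈ X.hom (Ψ d) (Ψ d') := by
    intro d d' f hf
    have h1 : ∀ p : (Σ c : C.Obj,
        {g : D.ext d' ⟶ D.ext (R.obj (H.obj c)) // g ∈ D.hom d' (R.obj (H.obj c))}),
        (eqToHom (lΨ d).ext ≫ f) ≫ (p.2.1 ≫ eqToHom (ec p.1).symm) ∈
          X.hom (Ψ d) (G.obj p.1) := by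
      rintro ⟨c, g, hg⟩
      have := S4 d c (f ≫ g) (D.comp_mem hf hg)
      simpa using this
    have := (lΨ d').initial' (Ψ d) (eqToHom (lΨ d).ext ≫ f) h1
    simpa using this
  -- Φ x is a fixed point of RL
  have ΦFix : ∀ x : X.Obj, D.iso (R.obj (L.obj (Φ x))) (Φ x) := by
    intro x
    constructor
    · -- le (RLΦx) (Φx)
      have hcounit := galois_counit gal (L.obj (Φ x))
      have h₂ : E.ext (L.obj (R.obj (L.obj (Φ x)))) = E.ext (L.obj (Φ x)) := hcounit.1
      have hQ : D.ext (R.obj (L.obj (Φ x))) = X.ext x :=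
        (R.ext (L.obj (Φ x))).trans ((L.ext (Φ x)).trans (lΦ x).ext)
      have h1 : ∀ p : (Σ c : C.Obj,
          {g : X.ext x ⟶ X.ext (G.obj c) // g ∈ X.hom x (G.obj c)}),
          eqToHom hQ ≫ (p.2.1 ≫ eqToHom (ec p.1)) ∈
            D.hom (R.obj (L.obj (Φ x))) (R.obj (H.obj p.1)) := by
        rintro ⟨c, g, hg⟩
        rw [gal']
        have hmem := (gal' (Φ x) c _).mp (S3 x c g hg)
        have := le_comp_mem hcounit h₂ hmem
        simpa using this
      have := (lΦ x).initial' (R.obj (L.obj (Φ x))) (eqToHom hQ) h1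
      exact ConcCat.le_iff.mpr ⟨hQ.trans (lΦ x).ext.symm, by simpa using this⟩
    · exact galois_unit gal (Φ x)
  -- F a maps into Ψ d for K a → d
  have S1 : ∀ (a : A.Obj) (d : D.Obj) (f : D.ext (K.obj a) ⟶ D.ext d),
      f ∈ D.hom (K.obj a) d →
        eqToHom (ea a) ≫ f ≫ eqToHom (lΨ d).ext.symm ∈ X.hom (F.obj a) (Ψ d) := by
    intro a d f hf
    have h1 : ∀ p : (Σ c : C.Obj,
        {g : D.ext d ⟶ D.ext (R.obj (H.obj c)) // g ∈ D.hom d (R.obj (H.obj c))}),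
        (eqToHom (ea a) ≫ f) ≫ (p.2.1 ≫ eqToHom (ec p.1).symm) ∈
          X.hom (F.obj a) (G.obj p.1) := by
      rintro ⟨c, g, hg⟩
      have := (S5 a c (f ≫ g)).mp (D.comp_mem hf hg)
      simpa using this
    have := (lΨ d).initial' (F.obj a) (eqToHom (ea a) ≫ f) h1
    simpa using this
  -- K a maps into Φ x for F a → x
  have S2 : ∀ (a : A.Obj) (x : X.Obj) (f : X.ext (F.obj a) ⟶ X.ext x),
      f ∈ X.hom (F.obj a) x →
        eqToHom (ea a).symm ≫ f ≫ eqToHom (lΦ x).ext.symm ∈ D.hom (K.obj a) (Φ x) := by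
    intro a x f hf
    have h1 : ∀ p : (Σ c : C.Obj,
        {g : X.ext x ⟶ X.ext (G.obj c) // g ∈ X.hom x (G.obj c)}),
        (eqToHom (ea a).symm ≫ f) ≫ (p.2.1 ≫ eqToHom (ec p.1)) ∈
          D.hom (K.obj a) (R.obj (H.obj p.1)) := by
      rintro ⟨c, g, hg⟩
      have := (S5 a c (eqToHom (ea a).symm ≫ (f ≫ g) ≫ eqToHom (ec c))).mpr
        (by simpa using X.comp_mem hf hg)
      simpa using this
    have := (lΦ x).initial' (K.obj a) (eqToHom (ea a).symm ≫ f) h1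
    simpa using this
  -- ΨΦ x ≅ x
  have D1 : ∀ x : X.Obj, X.iso (Ψ (Φ x)) x := by
    intro x
    constructor
    · -- le (ΨΦx) x
      obtain ⟨ι₀, Cs, gs, hmem, hinit⟩ := hG x
      have h : X.ext (Ψ (Φ x)) = X.ext x := (lΨ (Φ x)).ext.trans (lΦ x).ext
      refine ConcCat.le_iff.mpr ⟨h, ?_⟩
      apply hinit
      intro i
      have h1 := S3 x (Cs i) (gs i) (hmem i)
      have h2 := S4 (Φ x) (Cs i) _ h1
      simpa using h2
    · -- le x (ΨΦx)
      obtain ⟨ι₁, As, fs, hfmem, hfin⟩ := hF x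
      have h : X.ext x = X.ext (Ψ (Φ x)) := ((lΨ (Φ x)).ext.trans (lΦ x).ext).symm
      refine ConcCat.le_iff.mpr ⟨h, ?_⟩
      have h1 : ∀ p : (Σ c : C.Obj,
          {g : D.ext (Φ x) ⟶ D.ext (R.obj (H.obj c)) //
            g ∈ D.hom (Φ x) (R.obj (H.obj c))}),
          eqToHom (lΦ x).ext.symm ≫ (p.2.1 ≫ eqToHom (ec p.1).symm) ∈
            X.hom x (G.obj p.1) := by
        rintro ⟨c, g, hg⟩
        apply hfin
        intro j
        have hu := S2 (As j) x (fs j) (hfmem j)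
        have hv := (S5 (As j) c _).mp (D.comp_mem hu hg)
        simpa using hv
      have := (lΨ (Φ x)).initial' x (eqToHom (lΦ x).ext.symm) h1
      simpa using this
  -- ΦΨ d ≅ d for fixed points d
  have D2 : ∀ d : D.Obj, D.iso (R.obj (L.obj d)) d → D.iso (Φ (Ψ d)) d := by
    intro d hd
    constructor
    · -- le (ΦΨd) d
      obtain ⟨ι₃, Cs, hs, hhmem, hhinit⟩ := hH (L.obj d)
      have q : E.ext (L.obj (Φ (Ψ d))) = E.ext (L.obj d) :=
        (L.ext (Φ (Ψ d))).trans ((lΦ (Ψ d)).ext.trans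
          ((lΨ d).ext.trans (L.ext d).symm))
      have step1 : eqToHom q ∈ E.hom (L.obj (Φ (Ψ d))) (L.obj d) := by
        apply hhinit
        intro k
        have hsk : eqToHom (L.ext d).symm ≫ hs k ≫ eqToHom (R.ext (H.obj (Cs k))).symm ∈
            D.hom d (R.obj (H.obj (Cs k))) := by
          rw [gal']
          simpa using hhmem k
        have h2 := S4 d (Cs k) _ hsk
        have h3 := S3 (Ψ d) (Cs k) _ h2
        have h4 := (gal' (Φ (Ψ d)) (Cs k) _).mp h3
        simpa using h4
      -- transfer along Galois to D
      have step2 : eqToHom ((L.ext (Φ (Ψ d))).symm.trans (q.trans (R.ext (L.obj d)).symm)) ∈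
          D.hom (Φ (Ψ d)) (R.obj (L.obj d)) := by
        have := (galois_iff gal (Φ (Ψ d)) (L.obj d)
          (eqToHom ((L.ext (Φ (Ψ d))).symm.trans q))).mp (by simpa using step1)
        simpa using this
      have step3 : D.le (Φ (Ψ d)) (R.obj (L.obj d)) :=
        ConcCat.le_iff.mpr ⟨_, step2⟩
      exact ConcCat.le_trans step3 hd.1
    · -- le d (ΦΨd)
      obtain ⟨ι₂, As, fs, hmem, hfin⟩ := hK d
      have h : D.ext d = D.ext (Φ (Ψ d)) :=
        ((lΦ (Ψ d)).ext.trans (lΨ d).ext).symm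
      refine ConcCat.le_iff.mpr ⟨h, ?_⟩
      have h1 : ∀ p : (Σ c : C.Obj,
          {g : X.ext (Ψ d) ⟶ X.ext (G.obj c) // g ∈ X.hom (Ψ d) (G.obj c)}),
          eqToHom (lΨ d).ext.symm ≫ (p.2.1 ≫ eqToHom (ec p.1)) ∈
            D.hom d (R.obj (H.obj p.1)) := by
        rintro ⟨c, g, hg⟩
        apply hfin
        intro j
        have hu := S1 (As j) d (fs j) (hmem j)
        have hv := (S5 (As j) c (eqToHom (ea (As j)).symm ≫
          ((eqToHom (ea (As j)) ≫ fs j ≫ eqToHom (lΨ d).ext.symm) ≫ g) ≫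
            eqToHom (ec c))).mpr (by simpa using X.comp_mem hu hg)
        simpa using hv
      have := (lΦ (Ψ d)).initial' d (eqToHom (lΨ d).ext.symm) h1
      simpa using this
  -- assemble the concrete equivalence
  refine ⟨⟨fun x => ⟨Φ x, ΦFix x⟩, fun x => (lΦ x).ext, ?_⟩,
    ⟨fun P => Ψ P.1, fun P => (lΨ P.1).ext, ?_⟩, ?_, ?_⟩
  · intro x y f hf
    rw [hcast_eq]
    exact ΦFun x y f hf
  · intro P Q f hf
    rw [hcast_eq]
    exact ΨFun P.1 Q.1 f hf
  · intro x
    exact D1 x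
  · intro P
    exact D2 P.1 P.2

end FixRepr

/-- Theorem 7.7: for a Galois correspondence `(L,R)` between
topological categories `D` and `E` over `B`, a topological category `X` over `B` is
concretely equivalent to `Fix(RL)` if and only if there exist finally dense concrete
functors `F : A → X`, `K : A → D` and initially dense concrete functors `G : C → X`,
`H : C → E` with `E(LKa,Hc) = X(Fa,Gc)` as subsets of `B(|a|,|Hc|)`. -/
theorem concrete_fix_representation_dense {B : Type u} [CategoryTheory.Category.{u} B]
    {D E : ConcCat B} (hD : Topological D) (hE : Topological E)
    (L : ConcFun D E) (R : ConcFun E D) (gal : Galois L R)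
    (X : ConcCat B) (hX : Topological X) :
    ConcEquiv X (ConcCat.fix D (ConcFun.comp R L)) ↔
      ∃ (A C : ConcCat B) (F : ConcFun A X) (K : ConcFun A D)
        (G : ConcFun C X) (H : ConcFun C E),
        FinallyDense F ∧ FinallyDense K ∧ InitiallyDense G ∧ InitiallyDense H ∧
        ∀ (a : A.Obj) (c : C.Obj),
          scast ((L.ext (K.obj a)).trans (K.ext a)) (H.ext c)
              (E.hom (L.obj (K.obj a)) (H.obj c)) =
            scast (F.ext a) (G.ext c) (X.hom (F.obj a) (G.obj c)) := by
  constructor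
  · intro heq
    exact fix_forward L R gal X heq
  · rintro ⟨A, C, F, K, G, H, hF, hK, hG, hH, homc⟩
    exact fix_backward hD L R gal X hX F K G H hF hK hG hH homc
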